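/- For every nonnegative real number τ, the Gaussian Mills ratio R(τ) = Q(τ)/φ(τ), where φ(τ) = (1/√(2π))·exp(−τ²/2) and Q(τ) = ∫_τ^∞ φ(x) dx, satisfies 2/(τ + √(τ² + 4)) ≤ R(τ) ≤ 2/(τ + √(τ² + 8/π)). -/

import Mathlib

open MeasureTheory Real Set

/-- The standard Gaussian density `φ(x) = (1/√(2π))·exp(−x²/2)`. -/
noncomputable def gaussPDF (x : ℝ) : ℝ := (Real.sqrt (2 * Real.pi))⁻¹ * Real.exp (-x ^ 2 / 2)

/-- The Gaussian Q-function `Q(τ) = ∫_τ^∞ φ(x) dx`. -/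
noncomputable def gaussQ (τ : ℝ) : ℝ := ∫ x in Set.Ioi τ, gaussPDF x

/-- The Gaussian Mills ratio `R(τ) = Q(τ)/φ(τ)`. -/
noncomputable def millsR (τ : ℝ) : ℝ := gaussQ τ / gaussPDF τ

open Filter

lemma gaussPDF_eq (x : ℝ) : gaussPDF x = (Real.sqrt (2 * Real.pi))⁻¹ * Real.exp (-(1/2) * x ^ 2) := by
  rw [gaussPDF]; ring_nf

lemma gaussPDF_pos (x : ℝ) : 0 < gaussPDF x := by
  apply mul_pos (inv_pos.2 (Real.sqrt_pos.2 (by positivity))) (Real.exp_pos _)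

lemma continuous_gaussPDF : Continuous gaussPDF := by
  unfold gaussPDF
  exact continuous_const.mul ((continuous_pow 2).neg.div_const 2).rexp

lemma integrable_gaussPDF : Integrable gaussPDF := by
  have : gaussPDF = fun x => (Real.sqrt (2 * Real.pi))⁻¹ * Real.exp (-(1/2) * x ^ 2) :=
    funext gaussPDF_eq
  rw [this]
  exact (integrable_exp_neg_mul_sq (by norm_num)).const_mul _

lemma hasDerivAt_gaussPDF (x : ℝ) : HasDerivAt gaussPDF (-x * gaussPDF x) x := by
  have h : HasDerivAt (fun y : ℝ => -y ^ 2 / 2) (-x) x := by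
    have := ((hasDerivAt_pow 2 x).neg).div_const 2
    simpa using this.congr_deriv (by ring)
  have h2 := (h.exp).const_mul (Real.sqrt (2 * Real.pi))⁻¹
  show HasDerivAt (fun y => (Real.sqrt (2 * Real.pi))⁻¹ * Real.exp (-y ^ 2 / 2)) _ x
  refine h2.congr_deriv ?_
  rw [gaussPDF]; ring

lemma tendsto_gaussPDF_atTop : Tendsto gaussPDF atTop (nhds 0) := by
  rw [show (0:ℝ) = (Real.sqrt (2 * Real.pi))⁻¹ * 0 by ring]
  apply Tendsto.const_mul
  apply Real.tendsto_exp_atBot.comp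
  apply Tendsto.atBot_div_const (by norm_num)
  exact tendsto_neg_atBot_iff.2 (tendsto_pow_atTop (by norm_num))

lemma gaussQ_zero : gaussQ 0 = 1/2 := by
  rw [gaussQ]
  simp_rw [gaussPDF_eq]
  rw [MeasureTheory.integral_const_mul, integral_gaussian_Ioi]
  rw [show Real.pi / (1/2) = 2 * Real.pi by ring]
  rw [← mul_div_assoc, inv_mul_cancel₀ (ne_of_gt (Real.sqrt_pos.2 (by positivity)))]

lemma gaussQ_split {a b : ℝ} (h : a ≤ b) :
    gaussQ a = (∫ x in a..b, gaussPDF x) + gaussQ b := by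
  rw [intervalIntegral.integral_of_le h, gaussQ, gaussQ,
    ← Ioc_union_Ioi_eq_Ioi h]
  rw [MeasureTheory.setIntegral_union (Set.Ioc_disjoint_Ioi le_rfl) measurableSet_Ioi
    integrable_gaussPDF.integrableOn integrable_gaussPDF.integrableOn]

lemma hasDerivAt_gaussQ (τ : ℝ) : HasDerivAt gaussQ (-gaussPDF τ) τ := by
  have hF : HasDerivAt (fun t => gaussQ (τ-1) - ∫ x in (τ-1)..t, gaussPDF x)
      (-gaussPDF τ) τ := by
    apply HasDerivAt.const_sub
    exact intervalIntegral.integral_hasDerivAt_right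
      integrable_gaussPDF.intervalIntegrable
      (continuous_gaussPDF.stronglyMeasurable.stronglyMeasurableAtFilter)
      continuous_gaussPDF.continuousAt
  apply hF.congr_of_eventuallyEq
  filter_upwards [Ioi_mem_nhds (show τ-1 < τ by linarith)] with t ht
  rw [gaussQ_split (le_of_lt ht)]; ring

lemma tendsto_gaussQ_atTop : Tendsto gaussQ atTop (nhds 0) := by
  have h := intervalIntegral_tendsto_integral_Ioi 0 integrable_gaussPDF.integrableOn tendsto_id
  have : ∀ᶠ b in atTop, gaussQ b = gaussQ 0 - ∫ x in (0:ℝ)..b, gaussPDF x := by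
    filter_upwards [eventually_ge_atTop (0:ℝ)] with b hb
    rw [gaussQ_split hb]; ring
  rw [show (0:ℝ) = gaussQ 0 - gaussQ 0 by ring]
  exact Tendsto.congr' (this.mono fun b hb => hb.symm) ((tendsto_const_nhds).sub (by simpa [gaussQ] using h))

lemma gaussQ_nonneg (τ : ℝ) : 0 ≤ gaussQ τ :=
  MeasureTheory.setIntegral_nonneg measurableSet_Ioi (fun x _ => (gaussPDF_pos x).le)

lemma gaussQ_pos (τ : ℝ) : 0 < gaussQ τ := by
  rw [gaussQ_split (show τ ≤ τ + 1 by linarith)]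
  have h1 : 0 < ∫ x in τ..(τ+1), gaussPDF x := by
    apply intervalIntegral.intervalIntegral_pos_of_pos_on
      integrable_gaussPDF.intervalIntegrable
      (fun x _ => gaussPDF_pos x) (by linarith)
  linarith [gaussQ_nonneg (τ+1)]

lemma integrable_mul_gaussPDF : Integrable (fun x => x * gaussPDF x) := by
  have h := (integrable_mul_exp_neg_mul_sq (show (0:ℝ) < 1/2 by norm_num)).const_mul
    (Real.sqrt (2 * Real.pi))⁻¹
  apply h.congr
  filter_upwards with x
  rw [gaussPDF_eq]; ring

lemma tendsto_mul_gaussPDF_atTop : Tendsto (fun x => x * gaussPDF x) atTop (nhds 0) := by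
  have h := rpow_mul_exp_neg_mul_sq_isLittleO_exp_neg (show (0:ℝ) < 1/2 by norm_num) 1
  have h2 : Tendsto (fun x : ℝ => x * Real.exp (-(1/2) * x ^ 2)) atTop (nhds 0) := by
    have hb : Tendsto (fun x : ℝ => -(1/2) * x) atTop atBot :=
      (tendsto_const_mul_atBot_of_neg (by norm_num)).2 tendsto_id
    have := h.trans_tendsto (Real.tendsto_exp_atBot.comp hb)
    apply this.congr
    intro x; rw [Real.rpow_one]
  have h3 := h2.const_mul (Real.sqrt (2 * Real.pi))⁻¹
  rw [mul_zero] at h3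
  apply h3.congr
  intro x; rw [gaussPDF_eq]; ring

lemma integral_mul_gaussPDF (τ : ℝ) : ∫ x in Ioi τ, x * gaussPDF x = gaussPDF τ := by
  have hderiv : ∀ x ∈ Ici τ, HasDerivAt (fun y => -gaussPDF y) (x * gaussPDF x) x := by
    intro x _
    have := (hasDerivAt_gaussPDF x).neg
    refine this.congr_deriv ?_; ring
  have hlim : Tendsto (fun y => -gaussPDF y) atTop (nhds 0) := by
    simpa using tendsto_gaussPDF_atTop.neg
  have := integral_Ioi_of_hasDerivAt_of_tendsto' hderiv
    integrable_mul_gaussPDF.integrableOn hlim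
  rw [this]; ring

lemma integrableOn_sq_mul_gaussPDF {τ : ℝ} (hτ : 0 ≤ τ) :
    IntegrableOn (fun x => x ^ 2 * gaussPDF x) (Ioi τ) := by
  have h := (integrableOn_rpow_mul_exp_neg_mul_sq (show (0:ℝ) < 1/2 by norm_num)
    (show (-1:ℝ) < 2 by norm_num)).const_mul (Real.sqrt (2 * Real.pi))⁻¹
  have h2 : IntegrableOn (fun x => x ^ 2 * gaussPDF x) (Ioi 0) := by
    apply h.congr
    filter_upwards with x
    rw [gaussPDF_eq, show ((2:ℝ)) = ((2:ℕ):ℝ) by norm_num, Real.rpow_natCast]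
    push_cast; ring
  exact h2.mono_set (Ioi_subset_Ioi hτ)

lemma integral_sq_mul_gaussPDF {τ : ℝ} (hτ : 0 ≤ τ) :
    ∫ x in Ioi τ, x ^ 2 * gaussPDF x = τ * gaussPDF τ + gaussQ τ := by
  have hderiv : ∀ x ∈ Ici τ, HasDerivAt (fun y => -(y * gaussPDF y))
      ((x ^ 2 - 1) * gaussPDF x) x := by
    intro x _
    have := ((hasDerivAt_id x).mul (hasDerivAt_gaussPDF x)).neg
    refine this.congr_deriv ?_; simp; ring
  have hint : IntegrableOn (fun x => (x ^ 2 - 1) * gaussPDF x) (Ioi τ) := by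
    have h2 := (integrableOn_sq_mul_gaussPDF hτ).sub integrable_gaussPDF.integrableOn
    apply h2.congr
    filter_upwards with x
    simp [Pi.sub_apply]; ring
  have hlim : Tendsto (fun y => -(y * gaussPDF y)) atTop (nhds 0) := by
    simpa using tendsto_mul_gaussPDF_atTop.neg
  have key := integral_Ioi_of_hasDerivAt_of_tendsto' hderiv hint hlim
  have expand : ∫ x in Ioi τ, (x ^ 2 - 1) * gaussPDF x =
      (∫ x in Ioi τ, x ^ 2 * gaussPDF x) - gaussQ τ := by
    rw [gaussQ, ← MeasureTheory.integral_sub (integrableOn_sq_mul_gaussPDF hτ)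
      integrable_gaussPDF.integrableOn]
    congr 1; funext x; ring
  rw [expand] at key
  linarith [key]

lemma mills_lower {τ : ℝ} (hτ : 0 ≤ τ) :
    2 / (τ + Real.sqrt (τ ^ 2 + 4)) ≤ millsR τ := by
  set φ := gaussPDF τ with hφdef
  set Q := gaussQ τ with hQdef
  have hφ : 0 < φ := gaussPDF_pos τ
  have hQ : 0 < Q := gaussQ_pos τ
  set l : ℝ := φ / Q - τ with hldef
  have h0 : 0 ≤ ∫ x in Ioi τ, ((x - τ) - l) ^ 2 * gaussPDF x :=
    MeasureTheory.setIntegral_nonneg measurableSet_Ioi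
      (fun x _ => mul_nonneg (sq_nonneg _) (gaussPDF_pos x).le)
  have expand : ∫ x in Ioi τ, ((x - τ) - l) ^ 2 * gaussPDF x =
      (∫ x in Ioi τ, x ^ 2 * gaussPDF x)
        - (2 * (τ + l)) * (∫ x in Ioi τ, x * gaussPDF x)
        + ((τ + l) ^ 2) * Q := by
    have hint1 := integrableOn_sq_mul_gaussPDF hτ
    have hint2 : IntegrableOn (fun x => 2 * (τ + l) * (x * gaussPDF x)) (Ioi τ) :=
      integrable_mul_gaussPDF.integrableOn.const_mul _
    have hint3 : IntegrableOn (fun x => (τ + l) ^ 2 * gaussPDF x) (Ioi τ) :=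
      integrable_gaussPDF.integrableOn.const_mul _
    have step1 : ∫ x in Ioi τ, ((x - τ) - l) ^ 2 * gaussPDF x =
        ∫ x in Ioi τ, (x ^ 2 * gaussPDF x - 2 * (τ + l) * (x * gaussPDF x)
          + (τ + l) ^ 2 * gaussPDF x) := by
      congr 1; funext x; ring
    have hint12 : IntegrableOn (fun x => x ^ 2 * gaussPDF x
        - 2 * (τ + l) * (x * gaussPDF x)) (Ioi τ) := hint1.sub hint2
    rw [step1, MeasureTheory.integral_add hint12 hint3,
      MeasureTheory.integral_sub hint1 hint2, MeasureTheory.integral_const_mul,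
      MeasureTheory.integral_const_mul, hQdef, gaussQ]
  rw [expand, integral_sq_mul_gaussPDF hτ, integral_mul_gaussPDF τ] at h0
  rw [← hφdef, ← hQdef] at h0
  have key : φ ^ 2 ≤ Q ^ 2 + τ * φ * Q := by
    have hτl : τ + l = φ / Q := by rw [hldef]; ring
    rw [hτl] at h0
    have h2 := mul_le_mul_of_nonneg_right h0 hQ.le
    have e : φ / Q * Q = φ := div_mul_cancel₀ _ (ne_of_gt hQ)
    have e2 : (φ / Q) ^ 2 * Q ^ 2 = φ ^ 2 := by
      rw [← mul_pow, e]
    nlinarith [h2, e, e2]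
  set s : ℝ := Real.sqrt (τ ^ 2 + 4) with hsdef
  have hs2 : s ^ 2 = τ ^ 2 + 4 := Real.sq_sqrt (by positivity)
  have hs0 : 0 ≤ s := Real.sqrt_nonneg _
  have hsτ : τ ≤ s := by nlinarith
  have h1 : s * φ ≤ 2 * Q + τ * φ := by
    have hab : 0 < s * φ + (2 * Q + τ * φ) := by
      have := mul_nonneg hs0 hφ.le
      have := mul_nonneg hτ hφ.le
      linarith
    nlinarith [key, hs2, hab]
  have hQlb : (s - τ) * φ ≤ 2 * Q := by linarith
  have hts : 0 < τ + s := by nlinarith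
  rw [millsR, ← hφdef, ← hQdef, div_le_div_iff₀ hts hφ]
  nlinarith [mul_le_mul_of_nonneg_right hQlb hts.le, hs2]

noncomputable def millsS (τ : ℝ) : ℝ := Real.sqrt (τ ^ 2 + 8 / Real.pi)
noncomputable def millsU (τ : ℝ) : ℝ := 2 / (τ + millsS τ)
noncomputable def millsG (τ : ℝ) : ℝ := gaussQ τ - millsU τ * gaussPDF τ

lemma c_gt_two : 2 < 8 / Real.pi :=
  (lt_div_iff₀ Real.pi_pos).2 (by nlinarith [Real.pi_lt_d2])

lemma c_lt_four : 8 / Real.pi < 4 :=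
  (div_lt_iff₀ Real.pi_pos).2 (by nlinarith [Real.pi_gt_three])

lemma millsS_sq (τ : ℝ) : millsS τ ^ 2 = τ ^ 2 + 8 / Real.pi :=
  Real.sq_sqrt (by positivity)

lemma millsS_pos (τ : ℝ) : 0 < millsS τ :=
  Real.sqrt_pos.2 (by positivity)

lemma millsS_add_pos {τ : ℝ} (hτ : 0 ≤ τ) : 0 < τ + millsS τ := by
  linarith [millsS_pos τ]

lemma hasDerivAt_millsS (τ : ℝ) : HasDerivAt millsS (τ / millsS τ) τ := by
  have hg : HasDerivAt (fun y : ℝ => y ^ 2 + 8 / Real.pi) (2 * τ) τ := by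
    simpa using ((hasDerivAt_pow 2 τ).add_const (8 / Real.pi))
  have h := (Real.hasDerivAt_sqrt (show τ ^ 2 + 8 / Real.pi ≠ 0 by positivity)).comp τ hg
  refine h.congr_deriv ?_
  rw [millsS]
  field_simp

lemma hasDerivAt_millsU {τ : ℝ} (hτ : 0 ≤ τ) :
    HasDerivAt millsU (-2 / (millsS τ * (τ + millsS τ))) τ := by
  have hden : HasDerivAt (fun y => y + millsS y) (1 + τ / millsS τ) τ :=
    (hasDerivAt_id τ).add (hasDerivAt_millsS τ)
  have hne : τ + millsS τ ≠ 0 := ne_of_gt (millsS_add_pos hτ)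
  have h := (hasDerivAt_const τ (2:ℝ)).div hden hne
  refine h.congr_deriv ?_
  have hS := millsS_pos τ
  field_simp
  ring

lemma hasDerivAt_millsG {τ : ℝ} (hτ : 0 ≤ τ) :
    HasDerivAt millsG (gaussPDF τ *
      (τ * millsU τ - 1 + 2 / (millsS τ * (τ + millsS τ)))) τ := by
  have h := (hasDerivAt_gaussQ τ).sub ((hasDerivAt_millsU hτ).mul (hasDerivAt_gaussPDF τ))
  refine h.congr_deriv ?_
  rw [millsU]
  ring

noncomputable def millsTstar : ℝ := (8 / Real.pi - 2) / Real.sqrt (4 - 8 / Real.pi)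

lemma millsTstar_pos : 0 < millsTstar := by
  apply div_pos (by linarith [c_gt_two]) (Real.sqrt_pos.2 (by linarith [c_lt_four]))

lemma millsE_eq {τ : ℝ} (hτ : 0 ≤ τ) :
    τ * millsU τ - 1 + 2 / (millsS τ * (τ + millsS τ)) =
      (τ * millsS τ - τ ^ 2 - (8 / Real.pi - 2)) / (millsS τ * (τ + millsS τ)) := by
  have hS2 := millsS_sq τ
  have hS := millsS_pos τ
  have hts := millsS_add_pos hτ
  rw [millsU, show 8 / Real.pi = millsS τ ^ 2 - τ ^ 2 by linarith]
  field_simp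
  ring

lemma millsG_deriv {τ : ℝ} (hτ : 0 ≤ τ) :
    deriv millsG τ = gaussPDF τ *
      ((τ * millsS τ - τ ^ 2 - (8 / Real.pi - 2)) / (millsS τ * (τ + millsS τ))) := by
  rw [(hasDerivAt_millsG hτ).deriv, millsE_eq hτ]

lemma millsN_nonpos {τ : ℝ} (hτ : 0 ≤ τ) (hle : τ ≤ millsTstar) :
    τ * millsS τ - τ ^ 2 - (8 / Real.pi - 2) ≤ 0 := by
  have hc2 : (0:ℝ) < 8 / Real.pi - 2 := by linarith [c_gt_two]
  have hc4 : (0:ℝ) < 4 - 8 / Real.pi := by linarith [c_lt_four]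
  have hr : 0 < Real.sqrt (4 - 8 / Real.pi) := Real.sqrt_pos.2 hc4
  have h1 : τ * Real.sqrt (4 - 8 / Real.pi) ≤ 8 / Real.pi - 2 := by
    rw [millsTstar] at hle
    calc τ * Real.sqrt (4 - 8 / Real.pi)
        ≤ (8 / Real.pi - 2) / Real.sqrt (4 - 8 / Real.pi) * Real.sqrt (4 - 8 / Real.pi) :=
          mul_le_mul_of_nonneg_right hle hr.le
      _ = 8 / Real.pi - 2 := div_mul_cancel₀ _ (ne_of_gt hr)
  have h2 : (4 - 8 / Real.pi) * τ ^ 2 ≤ (8 / Real.pi - 2) ^ 2 := by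
    have := mul_le_mul h1 h1 (by positivity) hc2.le
    have hsq : Real.sqrt (4 - 8 / Real.pi) ^ 2 = 4 - 8 / Real.pi := Real.sq_sqrt hc4.le
    nlinarith [this, hsq]
  have hS2 := millsS_sq τ
  have hS := millsS_pos τ
  have ha : 0 ≤ τ * millsS τ := mul_nonneg hτ hS.le
  have hb : 0 < τ ^ 2 + (8 / Real.pi - 2) := by positivity
  have hsq : (τ * millsS τ) ^ 2 ≤ (τ ^ 2 + (8 / Real.pi - 2)) ^ 2 := by
    rw [mul_pow, hS2]; nlinarith [h2]
  nlinarith [hsq, ha, hb]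

lemma millsN_nonneg {τ : ℝ} (hge : millsTstar ≤ τ) :
    0 ≤ τ * millsS τ - τ ^ 2 - (8 / Real.pi - 2) := by
  have hτ : 0 ≤ τ := le_trans millsTstar_pos.le hge
  have hc2 : (0:ℝ) < 8 / Real.pi - 2 := by linarith [c_gt_two]
  have hc4 : (0:ℝ) < 4 - 8 / Real.pi := by linarith [c_lt_four]
  have hr : 0 < Real.sqrt (4 - 8 / Real.pi) := Real.sqrt_pos.2 hc4
  have h1 : 8 / Real.pi - 2 ≤ τ * Real.sqrt (4 - 8 / Real.pi) := by
    rw [millsTstar] at hge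
    calc (8 / Real.pi - 2) = (8 / Real.pi - 2) / Real.sqrt (4 - 8 / Real.pi)
          * Real.sqrt (4 - 8 / Real.pi) := (div_mul_cancel₀ _ (ne_of_gt hr)).symm
      _ ≤ τ * Real.sqrt (4 - 8 / Real.pi) := mul_le_mul_of_nonneg_right hge hr.le
  have h2 : (8 / Real.pi - 2) ^ 2 ≤ (4 - 8 / Real.pi) * τ ^ 2 := by
    have := mul_le_mul h1 h1 hc2.le (by positivity)
    have hsq : Real.sqrt (4 - 8 / Real.pi) ^ 2 = 4 - 8 / Real.pi := Real.sq_sqrt hc4.le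
    nlinarith [this, hsq]
  have hS2 := millsS_sq τ
  have hS := millsS_pos τ
  have ha : 0 ≤ τ * millsS τ := mul_nonneg hτ hS.le
  have hb : 0 < τ ^ 2 + (8 / Real.pi - 2) := by positivity
  have hsq : (τ ^ 2 + (8 / Real.pi - 2)) ^ 2 ≤ (τ * millsS τ) ^ 2 := by
    rw [mul_pow, hS2]; nlinarith [h2]
  nlinarith [hsq, ha, hb]

lemma millsG_zero : millsG 0 = 0 := by
  have hπ : (0:ℝ) < Real.pi := Real.pi_pos
  have key : Real.sqrt (8 / Real.pi) * Real.sqrt (2 * Real.pi) = 4 := by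
    rw [← Real.sqrt_mul (by positivity)]
    rw [show 8 / Real.pi * (2 * Real.pi) = 16 by field_simp; ring]
    rw [show (16:ℝ) = 4 ^ 2 by norm_num, Real.sqrt_sq (by norm_num)]
  have h1 : (0:ℝ) < Real.sqrt (8 / Real.pi) := Real.sqrt_pos.2 (by positivity)
  have h2 : (0:ℝ) < Real.sqrt (2 * Real.pi) := Real.sqrt_pos.2 (by positivity)
  rw [millsG, gaussQ_zero, millsU, millsS, gaussPDF]
  rw [show (0:ℝ) ^ 2 + 8 / Real.pi = 8 / Real.pi by norm_num]
  rw [show -(0:ℝ) ^ 2 / 2 = 0 by norm_num, Real.exp_zero, zero_add, mul_one]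
  rw [sub_eq_zero]
  field_simp
  have key2 : Real.sqrt 8 * Real.sqrt 2 = 4 := by
    rw [← Real.sqrt_mul (by norm_num)]
    rw [show (8:ℝ) * 2 = 16 by norm_num, show (16:ℝ) = 4 ^ 2 by norm_num,
      Real.sqrt_sq (by norm_num)]
  linear_combination key

lemma millsG_tendsto : Tendsto millsG atTop (nhds 0) := by
  have hc : (0:ℝ) < 8 / Real.pi := by linarith [c_gt_two]
  have hU : ∀ τ : ℝ, 0 ≤ τ → millsU τ ≤ 2 / Real.sqrt (8 / Real.pi) := by
    intro τ hτ
    have hS : Real.sqrt (8 / Real.pi) ≤ millsS τ := by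
      apply Real.sqrt_le_sqrt; nlinarith [sq_nonneg τ]
    have h8 : 0 < Real.sqrt (8 / Real.pi) := Real.sqrt_pos.2 hc
    rw [millsU]
    apply div_le_div_of_nonneg_left (by norm_num) h8
    linarith [millsS_pos τ]
  have hprod : Tendsto (fun τ => millsU τ * gaussPDF τ) atTop (nhds 0) := by
    apply squeeze_zero'
    · filter_upwards [eventually_ge_atTop (0:ℝ)] with τ hτ
      exact mul_nonneg (le_of_lt (div_pos (by norm_num) (millsS_add_pos hτ)))
        (gaussPDF_pos τ).le
    · filter_upwards [eventually_ge_atTop (0:ℝ)] with τ hτ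
      exact mul_le_mul_of_nonneg_right (hU τ hτ) (gaussPDF_pos τ).le
    · have := tendsto_gaussPDF_atTop.const_mul (2 / Real.sqrt (8 / Real.pi))
      simpa using this
  have := tendsto_gaussQ_atTop.sub hprod
  exact (by simpa using this : Tendsto (fun x => gaussQ x - millsU x * gaussPDF x) atTop (nhds 0))

lemma millsG_nonpos {τ : ℝ} (hτ : 0 ≤ τ) : millsG τ ≤ 0 := by
  have hcont : ContinuousOn millsG (Ici 0) := fun x hx =>
    (hasDerivAt_millsG hx).continuousAt.continuousWithinAt
  rcases le_total τ millsTstar with hle | hge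
  · have hA : AntitoneOn millsG (Icc 0 millsTstar) := by
      apply antitoneOn_of_deriv_nonpos (convex_Icc _ _)
        (hcont.mono (Icc_subset_Ici_self))
      · intro x hx
        rw [interior_Icc] at hx
        exact (hasDerivAt_millsG hx.1.le).differentiableAt.differentiableWithinAt
      · intro x hx
        rw [interior_Icc] at hx
        rw [millsG_deriv hx.1.le]
        apply mul_nonpos_of_nonneg_of_nonpos (gaussPDF_pos x).le
        apply div_nonpos_of_nonpos_of_nonneg (millsN_nonpos hx.1.le hx.2.le)
        exact (mul_pos (millsS_pos x) (millsS_add_pos hx.1.le)).le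
    have := hA (left_mem_Icc.2 millsTstar_pos.le) ⟨hτ, hle⟩ hτ
    rw [millsG_zero] at this
    exact this
  · have hM : MonotoneOn millsG (Ici millsTstar) := by
      apply monotoneOn_of_deriv_nonneg (convex_Ici _)
        (hcont.mono (Ici_subset_Ici.2 millsTstar_pos.le))
      · intro x hx
        rw [interior_Ici] at hx
        exact (hasDerivAt_millsG (le_trans millsTstar_pos.le hx.le)).differentiableAt.differentiableWithinAt
      · intro x hx
        rw [interior_Ici] at hx
        rw [millsG_deriv (le_trans millsTstar_pos.le hx.le)]
        apply mul_nonneg (gaussPDF_pos x).le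
        apply div_nonneg (millsN_nonneg hx.le)
        exact (mul_pos (millsS_pos x) (millsS_add_pos (le_trans millsTstar_pos.le hx.le))).le
    apply ge_of_tendsto millsG_tendsto
    filter_upwards [eventually_ge_atTop τ] with t ht
    exact hM hge (le_trans hge ht) ht

lemma mills_upper {τ : ℝ} (hτ : 0 ≤ τ) :
    millsR τ ≤ 2 / (τ + Real.sqrt (τ ^ 2 + 8 / Real.pi)) := by
  have hG := millsG_nonpos hτ
  rw [millsG] at hG
  rw [millsR, div_le_iff₀ (gaussPDF_pos τ)]
  have : Real.sqrt (τ ^ 2 + 8 / Real.pi) = millsS τ := rfl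
  rw [this, show (2:ℝ) / (τ + millsS τ) = millsU τ from rfl]
  linarith

/-- For every nonnegative real `τ`,
`2/(τ + √(τ² + 4)) ≤ R(τ) ≤ 2/(τ + √(τ² + 8/π))`. -/
theorem mills_ratio_bounds (τ : ℝ) (hτ : 0 ≤ τ) :
    2 / (τ + Real.sqrt (τ ^ 2 + 4)) ≤ millsR τ ∧
      millsR τ ≤ 2 / (τ + Real.sqrt (τ ^ 2 + 8 / Real.pi)) :=
  ⟨mills_lower hτ, mills_upper hτ⟩
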